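/- For 0 < ε₁ < ε₂ define E₀(ε₁,ε₂) = (1/√2) | 2 − ((ε₁²+1)²/(ε₁(ε₂²−ε₁²))) arctan ε₁ + ((ε₂²+1)²/(ε₂(ε₂²−ε₁²))) arctan ε₂ − ((ε₂²+1)² π)/(2ε₂(ε₂²−ε₁²)) + ((ε₁²+1)² π)/(2ε₁(ε₂²−ε₁²)) |, E_I(ε₁,ε₂) = (1/√2) | 2 − ((ε₂²+1)²/(ε₂(ε₂²−ε₁²))) arctan ε₂ + ((ε₁²+1)²/(ε₁(ε₂²−ε₁²))) arctan ε₁ + ((ε₂²+1)² π)/(2ε₂(ε₂²−ε₁²)) |, and E_II(ε₁,ε₂) = (1/√2) | 2 + ((ε₂²+1)²/(ε₂(ε₂²−ε₁²))) arctan ε₂ − ((ε₁²+1)²/(ε₁(ε₂²−ε₁²))) arctan ε₁ |. Then: (a) for each fixed ε₁ > 0, E_I(ε₁,ε₂) > E_II(ε₁,ε₂) for ε₂ sufficiently close to ε₁ from above, and E_I(ε₁,ε₂) < E_II(ε₁,ε₂) for ε₂ sufficiently large, so that for each ε₁ > 0 there exists σ(ε₁) ∈ (ε₁, ∞) with E_I(ε₁,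 σ(ε₁)) = E_II(ε₁, σ(ε₁)); (b) there exist ε₁* > 0 and a continuous function σ* : (0, ε₁*) → ℝ with σ*(ε₁) > ε₁ such that E_II(ε₁, σ*(ε₁)) = E_I(ε₁, σ*(ε₁)) < E₀(ε₁, σ*(ε₁)) for all ε₁ ∈ (0, ε₁*). -/

import Mathlib

open Real

noncomputable section

/-- Action of the scalar connection `e₀` of the potential `W₂`. -/
def E0 (ε₁ ε₂ : ℝ) : ℝ :=
  (1 / Real.sqrt 2) *
    |2 - ((ε₁ ^ 2 + 1) ^ 2 / (ε₁ * (ε₂ ^ 2 - ε₁ ^ 2))) * arctan ε₁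
       + ((ε₂ ^ 2 + 1) ^ 2 / (ε₂ * (ε₂ ^ 2 - ε₁ ^ 2))) * arctan ε₂
       - ((ε₂ ^ 2 + 1) ^ 2 * π) / (2 * ε₂ * (ε₂ ^ 2 - ε₁ ^ 2))
       + ((ε₁ ^ 2 + 1) ^ 2 * π) / (2 * ε₁ * (ε₂ ^ 2 - ε₁ ^ 2))|

/-- Action of the inner pair of connections `e¹_±` of the potential `W₂`. -/
def EI (ε₁ ε₂ : ℝ) : ℝ :=
  (1 / Real.sqrt 2) *
    |2 - ((ε₂ ^ 2 + 1) ^ 2 / (ε₂ * (ε₂ ^ 2 - ε₁ ^ 2))) * arctan ε₂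
       + ((ε₁ ^ 2 + 1) ^ 2 / (ε₁ * (ε₂ ^ 2 - ε₁ ^ 2))) * arctan ε₁
       + ((ε₂ ^ 2 + 1) ^ 2 * π) / (2 * ε₂ * (ε₂ ^ 2 - ε₁ ^ 2))|

/-- Action of the outer pair of connections `e²_±` of the potential `W₂`. -/
def EII (ε₁ ε₂ : ℝ) : ℝ :=
  (1 / Real.sqrt 2) *
    |2 + ((ε₂ ^ 2 + 1) ^ 2 / (ε₂ * (ε₂ ^ 2 - ε₁ ^ 2))) * arctan ε₂
       - ((ε₁ ^ 2 + 1) ^ 2 / (ε₁ * (ε₂ ^ 2 - ε₁ ^ 2))) * arctan ε₁|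

namespace EqActAux

open Filter Topology

/-- `f x = (x²+1)² arctan x / x`. -/
def f (x : ℝ) : ℝ := (x^2+1)^2 * arctan x / x

/-- `P x = (x²+1)² π / (2x)`. -/
def P (x : ℝ) : ℝ := (x^2+1)^2 * π / (2*x)

/-- `g t = (t²+1)² (π/2 − 2 arctan t) / t`. -/
def g (t : ℝ) : ℝ := (t^2+1)^2 * (π/2 - 2*arctan t) / t

lemma arctan_pos' {x : ℝ} (hx : 0 < x) : 0 < arctan x := by
  rw [← Real.arctan_zero]; exact Real.arctan_strictMono hx

lemma arctan_le_self' {x : ℝ} (hx : 0 ≤ x) : arctan x ≤ x := by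
  have h1 : 0 ≤ arctan x := by
    rw [← Real.arctan_zero]; exact Real.arctan_strictMono.monotone hx
  have h2 := Real.le_tan h1 (Real.arctan_lt_pi_div_two x)
  rwa [Real.tan_arctan] at h2

lemma contAt_f {x : ℝ} (hx : x ≠ 0) : ContinuousAt f x :=
  ContinuousAt.div ((ContinuousAt.pow (by fun_prop) 2).mul
    Real.continuous_arctan.continuousAt) continuousAt_id hx

lemma contAt_g {x : ℝ} (hx : x ≠ 0) : ContinuousAt g x :=
  ContinuousAt.div ((ContinuousAt.pow (by fun_prop) 2).mul
    (by exact ContinuousAt.sub (by fun_prop) (Real.continuous_arctan.continuousAt.const_mul 2)))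
    continuousAt_id hx

lemma f_pos {x : ℝ} (hx : 0 < x) : 0 < f x :=
  div_pos (mul_pos (by positivity) (arctan_pos' hx)) hx

lemma f_lt_P {x : ℝ} (hx : 0 < x) : f x < P x := by
  have h : P x - f x = (x^2+1)^2*(π/2 - arctan x)/x := by
    unfold f P; field_simp
  have h2 : 0 < π/2 - arctan x := sub_pos.2 (arctan_lt_pi_div_two x)
  have h3 : 0 < (x^2+1)^2*(π/2 - arctan x)/x :=
    div_pos (mul_pos (by positivity) h2) hx
  linarith

lemma f_deriv {x : ℝ} (hx : 0 < x) :
    HasDerivAt f ((x^2+1)*((3*x^2-1)*arctan x + x)/x^2) x := by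
  have hu : HasDerivAt (fun y : ℝ => y^2+1) (2*x) x := by
    simpa using (hasDerivAt_pow 2 x).add_const 1
  have hv : HasDerivAt (fun y : ℝ => (y^2+1)^2) (2*(x^2+1)^1*(2*x)) x := hu.pow 2
  have hn : HasDerivAt (fun y : ℝ => (y^2+1)^2 * arctan y)
      (2*(x^2+1)^1*(2*x) * arctan x + (x^2+1)^2 * (1/(1+x^2))) x :=
    hv.mul (hasDerivAt_arctan x)
  have hq := hn.div (hasDerivAt_id x) hx.ne'
  convert hq using 1
  · rfl
  · rfl
  · rfl
  have h1 : (1:ℝ) + x^2 ≠ 0 := by positivity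
  simp only [id]
  field_simp
  ring

lemma f_mono : StrictMonoOn f (Set.Ioi 0) := by
  apply strictMonoOn_of_deriv_pos (convex_Ioi 0)
  · exact fun x hx => (contAt_f (ne_of_gt hx)).continuousWithinAt
  · intro x hx
    rw [interior_Ioi] at hx
    rw [(f_deriv hx).deriv]
    have hat := arctan_pos' hx
    have hle := arctan_le_self' hx.le
    have hN : 0 < (3*x^2-1)*arctan x + x := by
      nlinarith [mul_pos (mul_pos hx hx) hat]
    exact div_pos (mul_pos (by positivity) hN) (pow_pos hx 2)

lemma A_mono {s t : ℝ} (hs : 1 ≤ s) (hst : s < t) : (s^2+1)^2/s < (t^2+1)^2/t := by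
  rw [div_lt_div_iff₀ (by linarith) (by linarith)]
  have h1 : 0 < t - s := by linarith
  have ht1 : 1 ≤ t := by linarith
  have hst1 : (1:ℝ) ≤ s*t := by nlinarith
  have hX : (0:ℝ) ≤ t^2+s*t+s^2 := by nlinarith
  have h2 : (0:ℝ) < s*t*(t^2+s*t+s^2)+2*s*t-1 := by
    nlinarith [mul_le_mul_of_nonneg_right hst1 hX]
  nlinarith [mul_pos h1 h2]

lemma g_anti {s t : ℝ} (hs : 1 ≤ s) (hst : s < t) : g t < g s := by
  have hgs : g s = ((s^2+1)^2/s) * (π/2 - 2*arctan s) := by unfold g; ring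
  have hgt : g t = ((t^2+1)^2/t) * (π/2 - 2*arctan t) := by unfold g; ring
  have hA := A_mono hs hst
  have hA0 : 0 < (t^2+1)^2/t := by
    apply div_pos (by positivity); linarith
  have hB : π/2 - 2*arctan t < π/2 - 2*arctan s := by
    have := Real.arctan_strictMono hst; linarith
  have hBs : π/2 - 2*arctan s ≤ 0 := by
    have : arctan 1 ≤ arctan s := Real.arctan_strictMono.monotone hs
    rw [Real.arctan_one] at this; linarith
  rw [hgs, hgt]
  nlinarith

lemma g_anti_le {s t : ℝ} (hs : 1 ≤ s) (hst : s ≤ t) : g t ≤ g s := by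
  rcases eq_or_lt_of_le hst with h | h
  · rw [h]
  · exact (g_anti hs h).le

lemma g_one : g 1 = 0 := by unfold g; rw [Real.arctan_one]; ring

lemma g_two_lt : g 2 < -3 := by
  have h1 := Real.arctan_inv_of_pos (show (0:ℝ) < 2 by norm_num)
  have h2 : arctan (2:ℝ)⁻¹ ≤ 2⁻¹ := arctan_le_self' (by norm_num)
  have h3 : π/2 - 2*arctan 2 ≤ 1 - π/2 := by
    have : π/2 - arctan 2 ≤ 2⁻¹ := h1 ▸ h2
    linarith
  have hpi := Real.pi_gt_three
  unfold g
  rw [div_lt_iff₀ (by norm_num : (0:ℝ) < 2)]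
  nlinarith

lemma g_le_large {t : ℝ} (ht : 2 ≤ t) : g t ≤ -t/2 := by
  have ht0 : (0:ℝ) < t := by linarith
  have h1 := Real.arctan_inv_of_pos ht0
  have h2 : arctan t⁻¹ ≤ t⁻¹ := arctan_le_self' (by positivity)
  have h3 : t⁻¹ ≤ 1/2 := by
    rw [inv_le_comm₀ ht0 (by norm_num)]; linarith
  have hpi := Real.pi_gt_three
  have hB : π/2 - 2*arctan t ≤ -(1/2) := by
    have : π/2 - arctan t ≤ t⁻¹ := h1 ▸ h2
    linarith
  unfold g
  rw [div_le_iff₀ ht0]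
  nlinarith [mul_le_mul_of_nonneg_left hB (by positivity : (0:ℝ) ≤ (t^2+1)^2),
    sq_nonneg t, sq_nonneg (t^2)]

lemma EI_eq {e1 e2 : ℝ} (h1 : 0 < e1) (h12 : e1 < e2) :
    EI e1 e2 = (1/Real.sqrt 2) * (2 + (f e1 + P e2 - f e2)/(e2^2 - e1^2)) := by
  have h2 : 0 < e2 := h1.trans h12
  have hD : 0 < e2^2 - e1^2 := by nlinarith
  have key : 2 - ((e2 ^ 2 + 1) ^ 2 / (e2 * (e2 ^ 2 - e1 ^ 2))) * arctan e2
       + ((e1 ^ 2 + 1) ^ 2 / (e1 * (e2 ^ 2 - e1 ^ 2))) * arctan e1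
       + ((e2 ^ 2 + 1) ^ 2 * π) / (2 * e2 * (e2 ^ 2 - e1 ^ 2))
      = 2 + (f e1 + P e2 - f e2)/(e2^2 - e1^2) := by
    unfold f P; field_simp; ring
  have hpos : 0 < 2 + (f e1 + P e2 - f e2)/(e2^2 - e1^2) := by
    have h4 := f_pos h1
    have h5 := f_lt_P h2
    have : 0 < (f e1 + P e2 - f e2)/(e2^2 - e1^2) := by
      apply div_pos _ hD; linarith
    linarith
  rw [EI, key, abs_of_pos hpos]

lemma EII_eq {e1 e2 : ℝ} (h1 : 0 < e1) (h12 : e1 < e2) :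
    EII e1 e2 = (1/Real.sqrt 2) * (2 + (f e2 - f e1)/(e2^2 - e1^2)) := by
  have h2 : 0 < e2 := h1.trans h12
  have hD : 0 < e2^2 - e1^2 := by nlinarith
  have key : 2 + ((e2 ^ 2 + 1) ^ 2 / (e2 * (e2 ^ 2 - e1 ^ 2))) * arctan e2
       - ((e1 ^ 2 + 1) ^ 2 / (e1 * (e2 ^ 2 - e1 ^ 2))) * arctan e1
      = 2 + (f e2 - f e1)/(e2^2 - e1^2) := by
    unfold f; field_simp; ring
  have hff : f e1 < f e2 := f_mono h1 h2 h12
  have hpos : 0 < 2 + (f e2 - f e1)/(e2^2 - e1^2) := by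
    have : 0 < (f e2 - f e1)/(e2^2 - e1^2) := div_pos (by linarith) hD
    linarith
  rw [EII, key, abs_of_pos hpos]

lemma E0_ge {e1 e2 : ℝ} (h1 : 0 < e1) (h12 : e1 < e2) :
    (1/Real.sqrt 2) * (2 + (f e2 - f e1 + P e1 - P e2)/(e2^2 - e1^2)) ≤ E0 e1 e2 := by
  have h2 : 0 < e2 := h1.trans h12
  have hD : 0 < e2^2 - e1^2 := by nlinarith
  have key : 2 - ((e1 ^ 2 + 1) ^ 2 / (e1 * (e2 ^ 2 - e1 ^ 2))) * arctan e1
       + ((e2 ^ 2 + 1) ^ 2 / (e2 * (e2 ^ 2 - e1 ^ 2))) * arctan e2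
       - ((e2 ^ 2 + 1) ^ 2 * π) / (2 * e2 * (e2 ^ 2 - e1 ^ 2))
       + ((e1 ^ 2 + 1) ^ 2 * π) / (2 * e1 * (e2 ^ 2 - e1 ^ 2))
      = 2 + (f e2 - f e1 + P e1 - P e2)/(e2^2 - e1^2) := by
    unfold f P; field_simp; ring
  rw [E0, key]
  have hs : (0:ℝ) < 1/Real.sqrt 2 := by positivity
  exact mul_le_mul_of_nonneg_left (le_abs_self _) hs.le

lemma EI_sub_EII {e1 e2 : ℝ} (h1 : 0 < e1) (h12 : e1 < e2) :
    EI e1 e2 - EII e1 e2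
      = (1/Real.sqrt 2) * ((g e2 + 2 * f e1)/(e2^2 - e1^2)) := by
  have h2 : 0 < e2 := h1.trans h12
  have hD : 0 < e2^2 - e1^2 := by nlinarith
  rw [EI_eq h1 h12, EII_eq h1 h12]
  have hg : g e2 = P e2 - 2 * f e2 := by unfold g P f; field_simp
  rw [hg]
  field_simp
  ring

lemma EII_lt_EI {e1 e2 : ℝ} (h1 : 0 < e1) (h12 : e1 < e2)
    (hp : 0 < g e2 + 2 * f e1) : EII e1 e2 < EI e1 e2 := by
  have h2 : 0 < e2 := h1.trans h12
  have hD : 0 < e2^2 - e1^2 := by nlinarith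
  have := EI_sub_EII h1 h12
  have hq : 0 < (1/Real.sqrt 2) * ((g e2 + 2 * f e1)/(e2^2 - e1^2)) :=
    mul_pos (by positivity) (div_pos hp hD)
  linarith

lemma EI_lt_EII {e1 e2 : ℝ} (h1 : 0 < e1) (h12 : e1 < e2)
    (hp : g e2 + 2 * f e1 < 0) : EI e1 e2 < EII e1 e2 := by
  have h2 : 0 < e2 := h1.trans h12
  have hD : 0 < e2^2 - e1^2 := by nlinarith
  have := EI_sub_EII h1 h12
  have hq : (1/Real.sqrt 2) * ((g e2 + 2 * f e1)/(e2^2 - e1^2)) < 0 :=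
    mul_neg_of_pos_of_neg (by positivity) (div_neg_of_neg_of_pos hp hD)
  linarith

lemma EI_eq_EII {e1 e2 : ℝ} (h1 : 0 < e1) (h12 : e1 < e2)
    (hp : g e2 + 2 * f e1 = 0) : EI e1 e2 = EII e1 e2 := by
  have := EI_sub_EII h1 h12
  rw [hp] at this
  simp at this
  linarith

/-- part (a), near `ε₁`. -/
lemma partA1 (ε₁ : ℝ) (h1 : 0 < ε₁) :
    ∃ δ > (0:ℝ), ∀ ε₂, ε₁ < ε₂ → ε₂ < ε₁ + δ → 0 < g ε₂ + 2 * f ε₁ := by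
  have hHe : g ε₁ + 2 * f ε₁ = P ε₁ := by unfold g P f; field_simp; ring
  have h0 : (0:ℝ) < g ε₁ + 2 * f ε₁ := by rw [hHe]; unfold P; positivity
  have hH : ContinuousAt (fun t => g t + 2 * f ε₁) ε₁ :=
    (contAt_g h1.ne').add continuousAt_const
  have hev : ∀ᶠ t in 𝓝 ε₁, 0 < g t + 2 * f ε₁ := hH.eventually (eventually_gt_nhds h0)
  rw [Metric.eventually_nhds_iff] at hev
  obtain ⟨δ, hδ, hball⟩ := hev
  exact ⟨δ, hδ, fun ε₂ ha hb => hball (by rw [Real.dist_eq, abs_lt]; constructor <;> linarith)⟩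

/-- part (a), large `ε₂`. -/
lemma partA2 (ε₁ : ℝ) (h1 : 0 < ε₁) :
    ∃ T, ε₁ < T ∧ ∀ ε₂, T ≤ ε₂ → g ε₂ + 2 * f ε₁ < 0 := by
  refine ⟨max (ε₁+1) (max 2 (4 * f ε₁ + 1)), lt_of_lt_of_le (by linarith) (le_max_left _ _),
    fun ε₂ h => ?_⟩
  have h2 : 2 ≤ ε₂ := le_trans (le_trans (le_max_left _ _) (le_max_right _ _)) h
  have h4 : 4 * f ε₁ + 1 ≤ ε₂ := le_trans (le_trans (le_max_right _ _) (le_max_right _ _)) h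
  have := g_le_large h2
  linarith

/-- part (a), crossing. -/
lemma partA3 (ε₁ : ℝ) (h1 : 0 < ε₁) :
    ∃ σ, ε₁ < σ ∧ g σ + 2 * f ε₁ = 0 := by
  obtain ⟨δ, hδ, hpos⟩ := partA1 ε₁ h1
  obtain ⟨T, hT1, hneg⟩ := partA2 ε₁ h1
  set s := ε₁ + δ/2 with hs
  set T' := max T s + 1 with hT'
  have hsε : ε₁ < s := by rw [hs]; linarith
  have hsT' : s ≤ T' := by
    have := le_max_right T s; rw [hT']; linarith
  have hHs : 0 < g s + 2 * f ε₁ := hpos s hsε (by rw [hs]; linarith)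
  have hHT' : g T' + 2 * f ε₁ < 0 := by
    apply hneg; have := le_max_left T s; rw [hT']; linarith
  have hcont : ContinuousOn (fun t => g t + 2 * f ε₁) (Set.Icc s T') := by
    intro t ht
    have ht0 : t ≠ 0 := by have := ht.1; intro h; rw [h] at this; linarith
    exact ((contAt_g ht0).add continuousAt_const).continuousWithinAt
  have hIVT := intermediate_value_Icc' hsT' hcont
  have h0mem : (0:ℝ) ∈ Set.Icc (g T' + 2 * f ε₁) (g s + 2 * f ε₁) := ⟨hHT'.le, hHs.le⟩
  obtain ⟨σ, hσmem, hσeq⟩ := hIVT h0mem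
  exact ⟨σ, lt_of_lt_of_le hsε hσmem.1, hσeq⟩

/-- the crossing function for part (b). -/
def σs (x : ℝ) : ℝ := Function.invFunOn g (Set.Icc 1 2) (-(2 * f x))

lemma f_small {x : ℝ} (hx : x ∈ Set.Ioo (0:ℝ) (1/52)) : 0 < f x ∧ f x < 3/2 := by
  have h0 := hx.1
  have hub : arctan x ≤ x := arctan_le_self' h0.le
  refine ⟨f_pos h0, ?_⟩
  have hb : f x ≤ (x^2+1)^2 := by
    unfold f
    rw [div_le_iff₀ h0]
    nlinarith [arctan_pos' h0, sq_nonneg (x^2+1)]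
  have hx2 : x < 1/52 := hx.2
  have hxsq : x^2 < 1/2704 := by nlinarith
  nlinarith [mul_le_mul hxsq.le hxsq.le (sq_nonneg x) (by norm_num : (0:ℝ) ≤ 1/2704)]

lemma σs_spec {x : ℝ} (hx : x ∈ Set.Ioo (0:ℝ) (1/52)) :
    σs x ∈ Set.Ioo (1:ℝ) 2 ∧ g (σs x) = -(2 * f x) := by
  obtain ⟨hf0, hf32⟩ := f_small hx
  have hy1 : g 2 ≤ -(2 * f x) := by have := g_two_lt; linarith
  have hy2 : -(2 * f x) ≤ g 1 := by rw [g_one]; linarith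
  have hcont : ContinuousOn g (Set.Icc 1 2) := by
    intro t ht
    have : t ≠ 0 := by have := ht.1; intro h; rw [h] at this; linarith
    exact (contAt_g this).continuousWithinAt
  have hIVT := intermediate_value_Icc' (by norm_num : (1:ℝ) ≤ 2) hcont
  obtain ⟨t, htmem, hteq⟩ := hIVT ⟨hy1, hy2⟩
  have hex : ∃ a ∈ Set.Icc (1:ℝ) 2, g a = -(2 * f x) := ⟨t, htmem, hteq⟩
  have hmem := Function.invFunOn_mem hex
  have heq := Function.invFunOn_eq hex
  refine ⟨⟨?_, ?_⟩, heq⟩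
  · rcases eq_or_lt_of_le hmem.1 with h | h
    · exfalso
      rw [← h, g_one] at heq
      linarith
    · exact h
  · rcases eq_or_lt_of_le hmem.2 with h | h
    · exfalso
      rw [h] at heq
      have := g_two_lt
      linarith
    · exact h

lemma σs_cont : ContinuousOn σs (Set.Ioo 0 (1/52)) := by
  intro x hx
  apply ContinuousAt.continuousWithinAt
  obtain ⟨hσmem, hσeq⟩ := σs_spec hx
  rw [ContinuousAt, Metric.tendsto_nhds]
  intro ε hε
  set σ := σs x with hσdef
  set ε' := min (ε/2) (min ((σ-1)/2) ((2-σ)/2)) with hε'def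
  have hσ1 : 1 < σ := hσmem.1
  have hσ2 : σ < 2 := hσmem.2
  have hε'pos : 0 < ε' := by
    apply lt_min (by linarith) (lt_min (by linarith) (by linarith))
  have hε'a : ε' ≤ (σ-1)/2 := le_trans (min_le_right _ _) (min_le_left _ _)
  have hε'b : ε' ≤ (2-σ)/2 := le_trans (min_le_right _ _) (min_le_right _ _)
  have hε'c : ε' ≤ ε/2 := min_le_left _ _
  have h1le : 1 ≤ σ - ε' := by linarith
  have h2ge : σ + ε' ≤ 2 := by linarith
  have hlt : g (σ + ε') < g σ := g_anti (by linarith) (by linarith)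
  have hgt : g σ < g (σ - ε') := g_anti h1le (by linarith)
  have hcont : ContinuousAt (fun x' => -(2 * f x')) x :=
    ((contAt_f hx.1.ne').const_mul 2).neg
  have hnb : Set.Ioo (g (σ + ε')) (g (σ - ε')) ∈ 𝓝 (-(2 * f x)) :=
    isOpen_Ioo.mem_nhds ⟨by rw [← hσeq]; exact hlt, by rw [← hσeq]; exact hgt⟩
  have h2 := hcont.preimage_mem_nhds hnb
  have h3 : Set.Ioo (0:ℝ) (1/52) ∈ 𝓝 x := isOpen_Ioo.mem_nhds hx
  filter_upwards [h2, h3] with x' hx'2 hx'3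
  obtain ⟨hσ'mem, hσ'eq⟩ := σs_spec hx'3
  have hgσ' : g (σs x') ∈ Set.Ioo (g (σ + ε')) (g (σ - ε')) := by
    rw [hσ'eq]; exact hx'2
  have hclaim1 : σ - ε' < σs x' := by
    by_contra hcon
    push_neg at hcon
    have := g_anti_le hσ'mem.1.le hcon
    exact absurd hgσ'.2 (not_lt.2 this)
  have hclaim2 : σs x' < σ + ε' := by
    by_contra hcon
    push_neg at hcon
    have := g_anti_le (by linarith : 1 ≤ σ + ε') hcon
    exact absurd hgσ'.1 (not_lt.2 this)
  rw [Real.dist_eq, abs_lt]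
  constructor <;> linarith

lemma P26 {x : ℝ} (hx : x ∈ Set.Ioo (0:ℝ) (1/52)) : 26*π < P x := by
  obtain ⟨h0, h52⟩ := hx
  unfold P
  rw [lt_div_iff₀ (by linarith : (0:ℝ) < 2*x)]
  nlinarith [mul_pos Real.pi_pos (show (0:ℝ) < 1 - 52*x by linarith),
    mul_nonneg Real.pi_pos.le (show (0:ℝ) ≤ (x^2+1)^2 - 1 by nlinarith)]

lemma P_sigma_lt {σ : ℝ} (h : σ ∈ Set.Ioo (1:ℝ) 2) : P σ < 13*π := by
  obtain ⟨h1, h2⟩ := h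
  unfold P
  rw [div_lt_iff₀ (by linarith : (0:ℝ) < 2*σ)]
  have hσ4 : σ^2 < 4 := by nlinarith
  have hb : (σ^2+1)^2 < 25 := by nlinarith [sq_nonneg σ]
  nlinarith [mul_lt_mul_of_pos_right hb Real.pi_pos,
    mul_pos Real.pi_pos (show (0:ℝ) < 26*σ - 25 by linarith)]

lemma EI_lt_E0 {x : ℝ} (hx : x ∈ Set.Ioo (0:ℝ) (1/52)) :
    EI x (σs x) < E0 x (σs x) := by
  obtain ⟨hσmem, hσeq⟩ := σs_spec hx
  have hx1 : 0 < x := hx.1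
  have hσ0 : 0 < σs x := by linarith [hσmem.1]
  have hxσ : x < σs x := by linarith [hx.2, hσmem.1]
  have hD : 0 < (σs x)^2 - x^2 := by nlinarith
  have hP26 := P26 hx
  have hP13 := P_sigma_lt hσmem
  have hff : f x < f (σs x) := f_mono (Set.mem_Ioi.mpr hx1) (Set.mem_Ioi.mpr hσ0) hxσ
  have hnum : f x + P (σs x) - f (σs x) < f (σs x) - f x + P x - P (σs x) := by
    linarith [Real.pi_pos]
  rw [EI_eq hx1 hxσ]
  apply lt_of_lt_of_le _ (E0_ge hx1 hxσ)
  apply mul_lt_mul_of_pos_left _ (by positivity : (0:ℝ) < 1/Real.sqrt 2)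
  apply add_lt_add_right
  gcongr
end EqActAux

/-- (a) For each fixed `ε₁ > 0`, `E_I > E_II` for `ε₂` close to `ε₁`
from above and `E_I < E_II` for large `ε₂`, so the two actions cross at some
`σ(ε₁) > ε₁`.  (b) There are `ε₁* > 0` and a continuous `σ* : (0, ε₁*) → ℝ` with
`σ*(ε₁) > ε₁` and `E_II(ε₁,σ*(ε₁)) = E_I(ε₁,σ*(ε₁)) < E₀(ε₁,σ*(ε₁))`. -/
theorem equal_action_curve :
    (∀ ε₁ : ℝ, 0 < ε₁ →
      (∃ δ > (0 : ℝ), ∀ ε₂ : ℝ, ε₁ < ε₂ → ε₂ < ε₁ + δ → EII ε₁ ε₂ < EI ε₁ ε₂) ∧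
      (∃ T : ℝ, ∀ ε₂ : ℝ, T ≤ ε₂ → EI ε₁ ε₂ < EII ε₁ ε₂) ∧
      (∃ σ : ℝ, ε₁ < σ ∧ EI ε₁ σ = EII ε₁ σ)) ∧
    (∃ ε₁s : ℝ, 0 < ε₁s ∧ ∃ σs : ℝ → ℝ, ContinuousOn σs (Set.Ioo 0 ε₁s) ∧
      ∀ ε₁ ∈ Set.Ioo (0 : ℝ) ε₁s, ε₁ < σs ε₁ ∧
        EII ε₁ (σs ε₁) = EI ε₁ (σs ε₁) ∧ EI ε₁ (σs ε₁) < E0 ε₁ (σs ε₁)) := by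
  constructor
  · intro ε₁ h1
    refine ⟨?_, ?_, ?_⟩
    · obtain ⟨δ, hδ, hpos⟩ := EqActAux.partA1 ε₁ h1
      exact ⟨δ, hδ, fun ε₂ ha hb => EqActAux.EII_lt_EI h1 ha (hpos ε₂ ha hb)⟩
    · obtain ⟨T, hT, hneg⟩ := EqActAux.partA2 ε₁ h1
      exact ⟨T, fun ε₂ h => EqActAux.EI_lt_EII h1 (lt_of_lt_of_le hT h) (hneg ε₂ h)⟩
    · obtain ⟨σ, hσ, h0⟩ := EqActAux.partA3 ε₁ h1
      exact ⟨σ, hσ, EqActAux.EI_eq_EII h1 hσ h0⟩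
  · refine ⟨1/52, by norm_num, EqActAux.σs, EqActAux.σs_cont, ?_⟩
    intro x hx
    obtain ⟨hσmem, hσeq⟩ := EqActAux.σs_spec hx
    have hx1 : 0 < x := hx.1
    have hxσ : x < EqActAux.σs x := by linarith [hx.2, hσmem.1]
    refine ⟨hxσ, ?_, EqActAux.EI_lt_E0 hx⟩
    exact (EqActAux.EI_eq_EII hx1 hxσ (by rw [hσeq]; ring)).symm
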